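/- Let f : ℝ → M₂(ℂ) be continuous with f(t)₁₁ = conj(f(t)₂₂), f(t)₁₂ = conj(f(t)₂₁) and trace f(t) = 0 for all t, let λ₀, μ ∈ ℝ, and let a, c : ℝ → ℂ be differentiable functions satisfying ȧ = ε f₁₁ + iμ + ε(f₁₁ a + f₁₂ c) + iμ a and ċ + 2iλ₀ c = ε f₂₁ + ε(f₂₁ a + f₂₂ c) − iμ c. Then the function H(t) := a(t) + conj(a(t)) + |a(t)|² − |c(t)|² is constant: H′(t) = 0 for all t. -/

import Mathlib

open Complex

private lemma conj_hasDerivAt {a : ℝ → ℂ} {a' : ℂ} {t : ℝ} (h : HasDerivAt a a' t) :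
    HasDerivAt (fun s => (starRingEnd ℂ) (a s)) ((starRingEnd ℂ) a') t := by
  have h2 := Complex.conjCLE.hasFDerivAt.comp_hasDerivAt t h
  simp at h2
  exact h2

theorem stmt4 (f : ℝ → Matrix (Fin 2) (Fin 2) ℂ)
    (hfcont : ∀ i j, Continuous fun t => f t i j)
    (hfm : ∀ t, f t 0 0 = (starRingEnd ℂ) (f t 1 1) ∧ f t 0 1 = (starRingEnd ℂ) (f t 1 0))
    (hftr : ∀ t, Matrix.trace (f t) = 0)
    (ε lam0 μ : ℝ) (a c : ℝ → ℂ)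
    (ha : ∀ t, HasDerivAt a
      ((ε : ℂ) * f t 0 0 + I * μ + (ε : ℂ) * (f t 0 0 * a t + f t 0 1 * c t) + I * μ * a t) t)
    (hc : ∀ t, HasDerivAt c
      (-(2 * I * lam0 * c t) + (ε : ℂ) * f t 1 0 + (ε : ℂ) * (f t 1 0 * a t + f t 1 1 * c t)
        - I * μ * c t) t) :
    ∀ t, HasDerivAt
      (fun s => a s + (starRingEnd ℂ) (a s) + a s * (starRingEnd ℂ) (a s)
        - c s * (starRingEnd ℂ) (c s)) 0 t := by
  intro t
  have hA := ha t
  have hC := hc t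
  have hA' : HasDerivAt (fun s => (starRingEnd ℂ) (a s))
      ((starRingEnd ℂ) ((ε : ℂ) * f t 0 0 + I * μ + (ε : ℂ) * (f t 0 0 * a t + f t 0 1 * c t)
        + I * μ * a t)) t := conj_hasDerivAt hA
  have hC' : HasDerivAt (fun s => (starRingEnd ℂ) (c s))
      ((starRingEnd ℂ) (-(2 * I * lam0 * c t) + (ε : ℂ) * f t 1 0
        + (ε : ℂ) * (f t 1 0 * a t + f t 1 1 * c t) - I * μ * c t)) t := conj_hasDerivAt hC
  have hD := ((hA.add hA').add (hA.mul hA')).sub (hC.mul hC')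
  convert hD using 1
  · rfl
  · rfl
  have htr := hftr t
  simp only [Matrix.trace, Matrix.diag, Fin.sum_univ_two] at htr
  obtain ⟨h1, h2⟩ := hfm t
  have h11 : f t 1 1 = -f t 0 0 := by linear_combination htr
  have h10 : f t 1 0 = (starRingEnd ℂ) (f t 0 1) := by
    rw [h2]; simp
  rw [h11] at hD ⊢
  rw [h10]
  set A := a t
  set C := c t
  set P := f t 0 0
  set Q := f t 0 1
  have hP : (starRingEnd ℂ) P = -P := by
    have h := h1
    rw [h11, map_neg] at h
    linear_combination h
  simp only [map_add, map_sub, map_mul, map_neg, map_ofNat, Complex.conj_I,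
    Complex.conj_ofReal, hP, RingHom.id_apply]
  have hAA : (starRingEnd ℂ) ((starRingEnd ℂ) A) = A := by simp
  have hCC : (starRingEnd ℂ) ((starRingEnd ℂ) C) = C := by simp
  ring_nf
  simp only [Complex.conj_conj]
  ring
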